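/- For all y ∈ ℝ^p and x ∈ ℝ^m, the likelihood ratio is preserved under projection: 𝒩(y | H x, Σ) / 𝒩(y | 0, Σ) = 𝒩(T y | x, Σ_T) / 𝒩(T y | 0, Σ_T). -/

import Mathlib

open Matrix

/-- The Gaussian density `𝒩(z | μ, C) = (2π)^(−k/2) (det C)^(−1/2) exp(−½ (z−μ)ᵀ C⁻¹ (z−μ))`. -/
noncomputable def gaussDensity {k : ℕ} (z μ : Fin k → ℝ) (C : Matrix (Fin k) (Fin k) ℝ) : ℝ :=
  (2 * Real.pi) ^ (-(k : ℝ) / 2) * C.det ^ (-(1 : ℝ) / 2) *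
    Real.exp (-(1 / 2) * ((z - μ) ⬝ᵥ C⁻¹.mulVec (z - μ)))

private lemma aux_dot {a b : ℕ} (M : Matrix (Fin a) (Fin b) ℝ) (u : Fin b → ℝ)
    (w : Fin a → ℝ) : (M *ᵥ u) ⬝ᵥ w = u ⬝ᵥ (Mᵀ *ᵥ w) := by
  rw [dotProduct_mulVec, vecMul_transpose, dotProduct_comm]

/-- the likelihood ratio is preserved under the projection:
`𝒩(y | Hx, Σ) / 𝒩(y | 0, Σ) = 𝒩(Ty | x, Σ_T) / 𝒩(Ty | 0, Σ_T)`. -/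
theorem stmt_4 {p m : ℕ} (H : Matrix (Fin p) (Fin m) ℝ) (Cov : Matrix (Fin p) (Fin p) ℝ)
    (hH : LinearIndependent ℝ (fun j i => H i j)) (hCov : Cov.PosDef)
    (T : Matrix (Fin m) (Fin p) ℝ) (hT : T = (Hᵀ * Cov⁻¹ * H)⁻¹ * Hᵀ * Cov⁻¹)
    (CovT : Matrix (Fin m) (Fin m) ℝ) (hCovT : CovT = (Hᵀ * Cov⁻¹ * H)⁻¹) :
    ∀ (y : Fin p → ℝ) (x : Fin m → ℝ),
      gaussDensity y (H.mulVec x) Cov / gaussDensity y 0 Cov =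
        gaussDensity (T.mulVec y) x CovT / gaussDensity (T.mulVec y) 0 CovT := by
  intro y x
  subst hT hCovT
  set A := Hᵀ * Cov⁻¹ * H with hAdef
  have hCovInv : Cov⁻¹.PosDef := hCov.inv
  have hHinj : Function.Injective H.mulVec := Matrix.mulVec_injective_iff.mpr hH
  -- A is positive definite
  have hAherm : A.IsHermitian := by
    simpa [Matrix.conjTranspose_eq_transpose_of_trivial] using
      Matrix.isHermitian_conjTranspose_mul_mul H hCovInv.1
  have hApd : A.PosDef := by
    refine Matrix.PosDef.of_dotProduct_mulVec_pos hAherm (fun v hv => ?_)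
    have hHv : H *ᵥ v ≠ 0 := by
      intro h
      exact hv (hHinj (h.trans (Matrix.mulVec_zero H).symm))
    have := hCovInv.dotProduct_mulVec_pos hHv
    simpa [hAdef, ← Matrix.mulVec_mulVec, aux_dot] using this
  have hAdet : IsUnit A.det := hApd.det_pos.ne'.isUnit
  have hAinv : A⁻¹⁻¹ = A := Matrix.nonsing_inv_nonsing_inv A hAdet
  -- symmetry facts
  have hCovsym : Cov⁻¹ᵀ = Cov⁻¹ := by
    simpa [Matrix.conjTranspose_eq_transpose_of_trivial, Matrix.IsSymm] using hCovInv.1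
  have hAsym : Aᵀ = A := by
    simpa [Matrix.conjTranspose_eq_transpose_of_trivial, Matrix.IsSymm] using hAherm
  have hAisym : A⁻¹ᵀ = A⁻¹ := by
    rw [Matrix.transpose_nonsing_inv, hAsym]
  -- key matrix identities
  have hAT : A * (A⁻¹ * Hᵀ * Cov⁻¹) = Hᵀ * Cov⁻¹ := by
    rw [show A * (A⁻¹ * Hᵀ * Cov⁻¹) = (A * A⁻¹) * Hᵀ * Cov⁻¹ by
          simp only [Matrix.mul_assoc],
        Matrix.mul_nonsing_inv A hAdet, Matrix.one_mul]
  have hTA : (A⁻¹ * Hᵀ * Cov⁻¹)ᵀ * A = Cov⁻¹ * H := by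
    rw [Matrix.transpose_mul, Matrix.transpose_mul, hCovsym, hAisym, Matrix.transpose_transpose,
        show Cov⁻¹ * (H * A⁻¹) * A = Cov⁻¹ * H * (A⁻¹ * A) by
          simp only [Matrix.mul_assoc],
        Matrix.nonsing_inv_mul A hAdet, Matrix.mul_one]
  set v := (A⁻¹ * Hᵀ * Cov⁻¹) *ᵥ y with hv
  -- scalar identities
  have t1 : (H *ᵥ x) ⬝ᵥ Cov⁻¹ *ᵥ (H *ᵥ x) = x ⬝ᵥ A⁻¹⁻¹ *ᵥ x := by
    rw [hAinv, aux_dot, Matrix.mulVec_mulVec, Matrix.mulVec_mulVec, hAdef]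
  have t2 : (H *ᵥ x) ⬝ᵥ Cov⁻¹ *ᵥ y = x ⬝ᵥ A⁻¹⁻¹ *ᵥ v := by
    rw [hAinv, hv, aux_dot, Matrix.mulVec_mulVec, Matrix.mulVec_mulVec, hAT]
  have t3 : y ⬝ᵥ Cov⁻¹ *ᵥ (H *ᵥ x) = v ⬝ᵥ A⁻¹⁻¹ *ᵥ x := by
    rw [hAinv, hv, aux_dot, Matrix.mulVec_mulVec, Matrix.mulVec_mulVec, hTA]
  -- exponent equality
  have key : (y - H *ᵥ x) ⬝ᵥ Cov⁻¹ *ᵥ (y - H *ᵥ x) - (y - 0) ⬝ᵥ Cov⁻¹ *ᵥ (y - 0) =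
      (v - x) ⬝ᵥ A⁻¹⁻¹ *ᵥ (v - x) - (v - 0) ⬝ᵥ A⁻¹⁻¹ *ᵥ (v - 0) := by
    simp only [sub_zero, Matrix.mulVec_sub, sub_dotProduct, dotProduct_sub]
    linarith [t1, t2, t3]
  -- positivity of the constants
  have hc1 : (2 * Real.pi) ^ (-(p : ℝ) / 2) * Cov.det ^ (-(1 : ℝ) / 2) ≠ 0 :=
    mul_ne_zero (Real.rpow_pos_of_pos (by positivity) _).ne'
      (Real.rpow_pos_of_pos hCov.det_pos _).ne'
  have hc2 : (2 * Real.pi) ^ (-(m : ℝ) / 2) * (A⁻¹).det ^ (-(1 : ℝ) / 2) ≠ 0 :=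
    mul_ne_zero (Real.rpow_pos_of_pos (by positivity) _).ne'
      (Real.rpow_pos_of_pos hApd.inv.det_pos _).ne'
  unfold gaussDensity
  rw [mul_div_mul_left _ _ hc1, mul_div_mul_left _ _ hc2, ← Real.exp_sub, ← Real.exp_sub]
  congr 1
  linarith [key]
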